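/- Let k ≥ 1 and let f : ℕ → [0,1]. Define φ(t) = ∏_{s=1}^{t-1}(1 + (1 - f(s+1)/2)/s) and φ_k(t) = ∏_{s=1}^{t-1}(1 + (k/s)(1 - f(s+1)/2) + (k(k-1)/(4s²))(1 - f(s+1))). Then there exists a constant C > 0 depending only on k (and f) such that C^{-1} φ(t)^k ≤ φ_k(t) ≤ C φ(t)^k for all t ≥ 1. -/

import Mathlib

open Finset

lemma aux_pow (k : ℕ) : ∀ x : ℝ, 0 ≤ x → x ≤ 1 → (1+x)^k ≤ 1 + k*x + 4^k * x^2 := by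
  induction k with
  | zero => intro x hx hx1; norm_num; positivity
  | succ k ih =>
    intro x hx hx1
    have h := ih x hx hx1
    have hk4 : (k:ℝ) ≤ 4^k := by
      calc (k:ℝ) ≤ 2^k := by exact_mod_cast (Nat.lt_two_pow_self (n := k)).le
      _ ≤ 4^k := by gcongr; norm_num
    have h4 : (0:ℝ) < 4^k := by positivity
    have hx3 : x^3 ≤ x^2 := by nlinarith
    calc (1+x)^(k+1) = (1+x)^k * (1+x) := pow_succ _ _
      _ ≤ (1 + k*x + 4^k*x^2) * (1+x) := by nlinarith [pow_nonneg (by linarith : (0:ℝ) ≤ 1+x) k]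
      _ ≤ 1 + (k+1:ℕ)*x + 4^(k+1:ℕ)*x^2 := by push_cast; ring_nf; nlinarith

-- T ≤ P^k * (1+4^k/s^2)
lemma term_ub (k : ℕ) (s a c : ℝ) (hs : 1 ≤ s) (ha0 : 0 ≤ a) (ha1 : a ≤ 1)
    (hc : 0 ≤ c) (hcM : c ≤ 4^k) :
    1 + (k:ℝ)/s*a + c/s^2 ≤ (1 + a/s)^k * (1 + 4^k/s^2) := by
  have hs0 : (0:ℝ) < s := by linarith
  have hB : 1 + (k:ℝ)*(a/s) ≤ (1+a/s)^k := by
    apply one_add_mul_le_pow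
    have : 0 ≤ a/s := by positivity
    linarith
  have h4 : (0:ℝ) < 4^k := by positivity
  have hpos : (0:ℝ) ≤ 1 + 4^k/s^2 := by positivity
  have h1 : (1 + (k:ℝ)*(a/s)) * (1 + 4^k/s^2) ≤ (1+a/s)^k * (1 + 4^k/s^2) :=
    mul_le_mul_of_nonneg_right hB hpos
  have h2 : 1 + (k:ℝ)/s*a + c/s^2 ≤ (1 + (k:ℝ)*(a/s)) * (1 + 4^k/s^2) := by
    have hcs : c/s^2 ≤ 4^k/s^2 := by gcongr
    have : (0:ℝ) ≤ (k:ℝ)*(a/s)*(4^k/s^2) := by positivity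
    have e : (1 + (k:ℝ)*(a/s)) * (1 + 4^k/s^2) = 1 + (k:ℝ)/s*a + 4^k/s^2 + (k:ℝ)*(a/s)*(4^k/s^2) := by
      field_simp; ring
    linarith [e ▸ le_refl ((1 + (k:ℝ)*(a/s)) * (1 + 4^k/s^2))]
  linarith

-- P^k ≤ T * (1+4^k/s^2)
lemma term_lb (k : ℕ) (s a c : ℝ) (hs : 1 ≤ s) (ha0 : 0 ≤ a) (ha1 : a ≤ 1)
    (hc : 0 ≤ c) :
    (1 + a/s)^k ≤ (1 + (k:ℝ)/s*a + c/s^2) * (1 + 4^k/s^2) := by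
  have hs0 : (0:ℝ) < s := by linarith
  have hx0 : 0 ≤ a/s := by positivity
  have hx1 : a/s ≤ 1 := by rw [div_le_one hs0]; linarith
  have h := aux_pow k (a/s) hx0 hx1
  have h4 : (0:ℝ) < 4^k := by positivity
  have h2 : 4^k * (a/s)^2 ≤ 4^k/s^2 := by
    rw [div_pow]
    have ha2 : a^2 ≤ 1 := by nlinarith
    have hss : (0:ℝ) < s^2 := by positivity
    calc 4^k * (a^2/s^2) ≤ 4^k * (1/s^2) := mul_le_mul_of_nonneg_left ((div_le_div_iff_of_pos_right hss).mpr ha2) h4.le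
    _ = 4^k/s^2 := by ring
  have hexp : (1 + (k:ℝ)/s*a + c/s^2) * (1 + 4^k/s^2)
      = 1 + (k:ℝ)/s*a + 4^k/s^2 + c/s^2 + ((k:ℝ)/s*a)*(4^k/s^2) + (c/s^2)*(4^k/s^2) := by ring
  have hn1 : (0:ℝ) ≤ c/s^2 := by positivity
  have hn2 : (0:ℝ) ≤ ((k:ℝ)/s*a)*(4^k/s^2) := by positivity
  have hn3 : (0:ℝ) ≤ (c/s^2)*(4^k/s^2) := by positivity
  have : (k:ℝ)*(a/s) = (k:ℝ)/s*a := by ring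
  linarith [hexp ▸ le_refl ((1 + (k:ℝ)/s*a + c/s^2) * (1 + 4^k/s^2))]

lemma aux_sum (n : ℕ) (hn : 1 ≤ n) : ∑ s ∈ Icc 1 n, (1:ℝ)/(s:ℝ)^2 ≤ 2 - 1/n := by
  induction n, hn using Nat.le_induction with
  | base => norm_num
  | succ n hn ih =>
    rw [Finset.sum_Icc_succ_top (by omega)]
    have hn0 : (0:ℝ) < n := by exact_mod_cast hn
    have : (1:ℝ)/((n:ℝ)+1)^2 ≤ 1/n - 1/(n+1) := by
      rw [div_sub_div _ _ (ne_of_gt hn0) (by positivity)]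
      rw [div_le_div_iff₀ (by positivity) (by positivity)]
      ring_nf; nlinarith
    push_cast
    linarith

lemma aux_prod (M : ℝ) (hM : 0 ≤ M) (n : ℕ) :
    ∏ s ∈ Icc 1 n, (1 + M/(s:ℝ)^2) ≤ Real.exp (2*M) := by
  calc ∏ s ∈ Icc 1 n, (1 + M/(s:ℝ)^2) ≤ ∏ s ∈ Icc 1 n, Real.exp (M/(s:ℝ)^2) := by
        apply Finset.prod_le_prod
        · intro s hs
          have h1 : 1 ≤ s := (Finset.mem_Icc.mp hs).1
          have : (0:ℝ) < s := by exact_mod_cast h1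
          positivity
        · intro s hs; linarith [Real.add_one_le_exp (M/(s:ℝ)^2)]
  _ = Real.exp (∑ s ∈ Icc 1 n, M/(s:ℝ)^2) := (Real.exp_sum _ _).symm
  _ ≤ Real.exp (2*M) := by
        apply Real.exp_le_exp.mpr
        have he : ∑ s ∈ Icc 1 n, M/(s:ℝ)^2 = M * ∑ s ∈ Icc 1 n, 1/(s:ℝ)^2 := by
          rw [Finset.mul_sum]; apply Finset.sum_congr rfl; intro s _; ring
        rw [he]
        rcases Nat.eq_zero_or_pos n with h0 | h1
        · subst h0; simp; positivity
        · have h := aux_sum n h1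
          have hn0 : (0:ℝ) < n := by exact_mod_cast h1
          have h2 : ∑ s ∈ Icc 1 n, (1:ℝ)/(s:ℝ)^2 ≤ 2 := by
            have : (0:ℝ) < 1/n := by positivity
            linarith
          calc M * ∑ s ∈ Icc 1 n, (1:ℝ)/(s:ℝ)^2 ≤ M * 2 := by
                apply mul_le_mul_of_nonneg_left h2 hM
          _ = 2*M := by ring

theorem stmt_12 (k : ℕ) (hk : 1 ≤ k) (f : ℕ → ℝ)
    (hf : ∀ s, 0 ≤ f s ∧ f s ≤ 1)
    (φ φk : ℕ → ℝ)
    (hφ : ∀ t, φ t = ∏ s ∈ Finset.Icc 1 (t - 1),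
      (1 + (1 - f (s + 1) / 2) / (s : ℝ)))
    (hφk : ∀ t, φk t = ∏ s ∈ Finset.Icc 1 (t - 1),
      (1 + ((k : ℝ) / s) * (1 - f (s + 1) / 2)
        + ((k : ℝ) * (k - 1) / (4 * (s : ℝ) ^ 2)) * (1 - f (s + 1)))) :
    ∃ C : ℝ, 0 < C ∧ ∀ t : ℕ, 1 ≤ t →
      C⁻¹ * (φ t) ^ k ≤ φk t ∧ φk t ≤ C * (φ t) ^ k := by
  set M : ℝ := 4^k with hMdef
  have hM0 : (0:ℝ) < M := by positivity
  refine ⟨Real.exp (2*M), Real.exp_pos _, ?_⟩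
  intro t ht
  set n := t - 1 with hn
  -- facts about k
  have hk1 : (1:ℝ) ≤ (k:ℝ) := by exact_mod_cast hk
  have hk2 : (k:ℝ) ≤ 2^k := by exact_mod_cast (Nat.lt_two_pow_self (n := k)).le
  have h24 : (4:ℝ)^k = ((2:ℝ)^k)^2 := by
    rw [← pow_mul, mul_comm, pow_mul]; norm_num
  -- per-s data
  have key : ∀ s ∈ Icc 1 n,
      (1 + ((k : ℝ) / s) * (1 - f (s + 1) / 2)
        + ((k : ℝ) * ((k:ℝ) - 1) / (4 * (s : ℝ) ^ 2)) * (1 - f (s + 1)))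
        ≤ (1 + (1 - f (s + 1) / 2) / (s : ℝ))^k * (1 + M/(s:ℝ)^2) ∧
      (1 + (1 - f (s + 1) / 2) / (s : ℝ))^k
        ≤ (1 + ((k : ℝ) / s) * (1 - f (s + 1) / 2)
        + ((k : ℝ) * ((k:ℝ) - 1) / (4 * (s : ℝ) ^ 2)) * (1 - f (s + 1))) * (1 + M/(s:ℝ)^2) ∧
      0 ≤ (1 + ((k : ℝ) / s) * (1 - f (s + 1) / 2)
        + ((k : ℝ) * ((k:ℝ) - 1) / (4 * (s : ℝ) ^ 2)) * (1 - f (s + 1))) := by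
    intro s hs
    have hs1 : 1 ≤ s := (Finset.mem_Icc.mp hs).1
    have hsr : (1:ℝ) ≤ (s:ℝ) := by exact_mod_cast hs1
    have hs0 : (0:ℝ) < (s:ℝ) := by linarith
    obtain ⟨hf0, hf1⟩ := hf (s+1)
    set a : ℝ := 1 - f (s+1) / 2 with hadef
    set c : ℝ := (k:ℝ) * ((k:ℝ)-1) / 4 * (1 - f (s+1)) with hcdef
    have ha0 : 0 ≤ a := by simp [hadef]; linarith
    have ha1 : a ≤ 1 := by simp [hadef]; linarith
    have hc0 : 0 ≤ c := by
      apply mul_nonneg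
      · apply div_nonneg _ (by norm_num)
        apply mul_nonneg (by linarith) (by linarith)
      · linarith
    have hcM : c ≤ 4^k := by
      have h1 : (k:ℝ) * ((k:ℝ)-1) ≤ 4^k := by
        rw [h24]; nlinarith
      have h2 : 1 - f (s+1) ≤ 1 := by linarith
      have h3 : (0:ℝ) ≤ (k:ℝ)*((k:ℝ)-1)/4 := by
        apply div_nonneg _ (by norm_num); nlinarith
      calc c ≤ (k:ℝ)*((k:ℝ)-1)/4 * 1 := mul_le_mul_of_nonneg_left h2 h3
      _ ≤ 4^k := by nlinarith
    have hT : 1 + ((k : ℝ) / s) * a + ((k : ℝ) * ((k:ℝ) - 1) / (4 * (s : ℝ) ^ 2)) * (1 - f (s + 1))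
        = 1 + (k:ℝ)/(s:ℝ)*a + c/(s:ℝ)^2 := by
      rw [hcdef]; ring
    refine ⟨?_, ?_, ?_⟩
    · rw [hT]; exact term_ub k (s:ℝ) a c hsr ha0 ha1 hc0 hcM
    · rw [hT]; exact term_lb k (s:ℝ) a c hsr ha0 ha1 hc0
    · rw [hT]
      have : (0:ℝ) ≤ (k:ℝ)/(s:ℝ)*a := by positivity
      have : (0:ℝ) ≤ c/(s:ℝ)^2 := by positivity
      linarith
  have hφpow : (φ t)^k = ∏ s ∈ Icc 1 n, (1 + (1 - f (s + 1) / 2) / (s : ℝ))^k := by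
    rw [hφ t, ← Finset.prod_pow]
  have hPnn : ∀ s ∈ Icc 1 n, (0:ℝ) ≤ (1 + (1 - f (s + 1) / 2) / (s : ℝ))^k := by
    intro s hs
    have hs1 : 1 ≤ s := (Finset.mem_Icc.mp hs).1
    have hsr : (1:ℝ) ≤ (s:ℝ) := by exact_mod_cast hs1
    obtain ⟨hf0, hf1⟩ := hf (s+1)
    have : (0:ℝ) ≤ 1 - f (s + 1) / 2 := by linarith
    positivity
  have hGnn : ∀ s ∈ Icc 1 n, (0:ℝ) ≤ 1 + M/(s:ℝ)^2 := by
    intro s hs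
    have hs1 : 1 ≤ s := (Finset.mem_Icc.mp hs).1
    have hsr : (1:ℝ) ≤ (s:ℝ) := by exact_mod_cast hs1
    have : (0:ℝ) < (s:ℝ) := by linarith
    positivity
  have hG := aux_prod M hM0.le n
  constructor
  · -- lower bound
    have hstep : (φ t)^k ≤ φk t * Real.exp (2*M) := by
      rw [hφpow, hφk t]
      calc ∏ s ∈ Icc 1 n, (1 + (1 - f (s + 1) / 2) / (s : ℝ))^k
          ≤ ∏ s ∈ Icc 1 n, ((1 + ((k : ℝ) / s) * (1 - f (s + 1) / 2)
            + ((k : ℝ) * ((k:ℝ) - 1) / (4 * (s : ℝ) ^ 2)) * (1 - f (s + 1))) * (1 + M/(s:ℝ)^2)) := by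
            apply Finset.prod_le_prod hPnn
            intro s hs; exact (key s hs).2.1
      _ = (∏ s ∈ Icc 1 n, (1 + ((k : ℝ) / s) * (1 - f (s + 1) / 2)
            + ((k : ℝ) * ((k:ℝ) - 1) / (4 * (s : ℝ) ^ 2)) * (1 - f (s + 1))))
            * ∏ s ∈ Icc 1 n, (1 + M/(s:ℝ)^2) := Finset.prod_mul_distrib
      _ ≤ (∏ s ∈ Icc 1 n, (1 + ((k : ℝ) / s) * (1 - f (s + 1) / 2)
            + ((k : ℝ) * ((k:ℝ) - 1) / (4 * (s : ℝ) ^ 2)) * (1 - f (s + 1)))) * Real.exp (2*M) := by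
            apply mul_le_mul_of_nonneg_left hG
            exact Finset.prod_nonneg (fun s hs => (key s hs).2.2)
    rw [inv_mul_le_iff₀ (Real.exp_pos _)]
    linarith [hstep]
  · -- upper bound
    rw [hφk t, hφpow]
    calc ∏ s ∈ Icc 1 n, (1 + ((k : ℝ) / s) * (1 - f (s + 1) / 2)
          + ((k : ℝ) * ((k:ℝ) - 1) / (4 * (s : ℝ) ^ 2)) * (1 - f (s + 1)))
        ≤ ∏ s ∈ Icc 1 n, ((1 + (1 - f (s + 1) / 2) / (s : ℝ))^k * (1 + M/(s:ℝ)^2)) := by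
          apply Finset.prod_le_prod (fun s hs => (key s hs).2.2)
          intro s hs; exact (key s hs).1
    _ = (∏ s ∈ Icc 1 n, (1 + (1 - f (s + 1) / 2) / (s : ℝ))^k)
          * ∏ s ∈ Icc 1 n, (1 + M/(s:ℝ)^2) := Finset.prod_mul_distrib
    _ ≤ (∏ s ∈ Icc 1 n, (1 + (1 - f (s + 1) / 2) / (s : ℝ))^k) * Real.exp (2*M) := by
          apply mul_le_mul_of_nonneg_left hG (Finset.prod_nonneg hPnn)
    _ = Real.exp (2*M) * ∏ s ∈ Icc 1 n, (1 + (1 - f (s + 1) / 2) / (s : ℝ))^k := mul_comm _ _
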